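/- Brezis–Lieb splitting for the F₁-modular: let (uₙ) be a sequence of measurable functions ℝ³ → ℝ and u : ℝ³ → ℝ measurable such that uₙ(x) → u(x) for a.e. x ∈ ℝ³ (with respect to Lebesgue measure), each function x ↦ F₁(uₙ(x)) is integrable, and sup_n ∫_{ℝ³} F₁(uₙ) dx < ∞. Then x ↦ F₁(u(x)) is integrable and ∫_{ℝ³} F₁(uₙ) dx − ∫_{ℝ³} F₁(uₙ − u) dx → ∫_{ℝ³} F₁(u) dx as n → ∞. -/

import Mathlib

open Real Filter

noncomputable def F1 (δ₀ s : ℝ) : ℝ :=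
  if s = 0 then 0
  else if |s| < δ₀ then -(1/2) * s^2 * Real.log (s^2)
  else -(1/2) * s^2 * (Real.log (δ₀^2) + 3) + 2*δ₀*|s| - δ₀^2/2

noncomputable def F1' (δ₀ s : ℝ) : ℝ :=
  if s = 0 then 0
  else if |s| < δ₀ then -(Real.log (s^2) + 1) * s
  else -(Real.log (δ₀^2) + 3) * s + 2*δ₀*(Real.sign s)

noncomputable def F2 (δ₀ s : ℝ) : ℝ :=
  if |s| < δ₀ then 0
  else (1/2) * s^2 * Real.log (s^2/δ₀^2) + 2*δ₀*|s| - (3/2)*s^2 - δ₀^2/2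

noncomputable def F2' (δ₀ s : ℝ) : ℝ :=
  if |s| < δ₀ then 0
  else s * Real.log (s^2/δ₀^2) - 2*s + 2*δ₀*(Real.sign s)

open MeasureTheory

namespace BLaux

variable {δ₀ : ℝ}

lemma hB (hδ₀ : 0 < δ₀) (hδ : δ₀ < Real.exp (-(3/2))) : Real.log (δ₀^2) + 3 < 0 := by
  have h1 : Real.log δ₀ < -(3/2) := by
    have := Real.log_lt_log hδ₀ hδ
    rwa [Real.log_exp] at this
  have h2 : Real.log (δ₀^2) = 2 * Real.log δ₀ := by
    rw [sq, Real.log_mul hδ₀.ne' hδ₀.ne']; ring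
  linarith

lemma F1_zero : F1 δ₀ 0 = 0 := by simp [F1]

lemma F1'_zero : F1' δ₀ 0 = 0 := by simp [F1']

lemma F1_even (s : ℝ) : F1 δ₀ (-s) = F1 δ₀ s := by
  unfold F1
  simp only [neg_eq_zero, abs_neg, neg_sq]

lemma F1'_odd (s : ℝ) : F1' δ₀ (-s) = -(F1' δ₀ s) := by
  unfold F1'
  rcases eq_or_ne s 0 with rfl | hs
  · simp
  · simp only [neg_eq_zero, hs, if_neg, abs_neg, neg_sq, Real.sign_neg]
    split_ifs <;> ring

lemma F1_of_lt {s : ℝ} (hs : 0 < s) (h : s < δ₀) :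
    F1 δ₀ s = -(1/2) * s^2 * Real.log (s^2) := by
  rw [F1, if_neg hs.ne', if_pos (by rwa [abs_of_pos hs])]

lemma F1_of_ge {s : ℝ} (hs : 0 < s) (h : δ₀ ≤ s) :
    F1 δ₀ s = -(1/2) * s^2 * (Real.log (δ₀^2) + 3) + 2*δ₀*s - δ₀^2/2 := by
  rw [F1, if_neg hs.ne', if_neg (by rw [abs_of_pos hs]; exact not_lt.2 h),
    abs_of_pos hs]

lemma F1'_of_lt {s : ℝ} (hs : 0 < s) (h : s < δ₀) :
    F1' δ₀ s = -(Real.log (s^2) + 1) * s := by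
  rw [F1', if_neg hs.ne', if_pos (by rwa [abs_of_pos hs])]

lemma F1'_of_ge {s : ℝ} (hs : 0 < s) (h : δ₀ ≤ s) :
    F1' δ₀ s = -(Real.log (δ₀^2) + 3) * s + 2*δ₀ := by
  rw [F1', if_neg hs.ne', if_neg (by rw [abs_of_pos hs]; exact not_lt.2 h),
    Real.sign_of_pos hs, mul_one]

lemma log_sq_lt {s : ℝ} (hs : 0 < s) (h : s < δ₀) (hδ₀ : 0 < δ₀)
    (hδ : δ₀ < Real.exp (-(3/2))) : Real.log (s^2) < -3 := by
  have h1 : Real.log s < -(3/2) := by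
    have := Real.log_lt_log hs (h.trans hδ)
    rwa [Real.log_exp] at this
  have h2 : Real.log (s^2) = 2 * Real.log s := by
    rw [sq, Real.log_mul hs.ne' hs.ne']; ring
  linarith

lemma F1_nonneg (hδ₀ : 0 < δ₀) (hδ : δ₀ < Real.exp (-(3/2))) (s : ℝ) :
    0 ≤ F1 δ₀ s := by
  have hBn := hB hδ₀ hδ
  rcases eq_or_ne s 0 with rfl | hs
  · simp [F1_zero]
  · have habs : 0 < |s| := abs_pos.2 hs
    have heq : F1 δ₀ s = F1 δ₀ |s| := by
      rcases abs_cases s with ⟨h, _⟩ | ⟨h, _⟩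
      · rw [h]
      · rw [h, F1_even]
    rw [heq]
    rcases lt_or_ge |s| δ₀ with h | h
    · rw [F1_of_lt habs h]
      have := log_sq_lt habs h hδ₀ hδ
      nlinarith [sq_nonneg (|s|)]
    · rw [F1_of_ge habs h]
      nlinarith [sq_nonneg (|s| - δ₀), sq_nonneg |s|, abs_pos.2 hs]

lemma F1_abs (s : ℝ) : F1 δ₀ s = F1 δ₀ |s| := by
  rcases abs_cases s with ⟨h, _⟩ | ⟨h, _⟩
  · rw [h]
  · rw [h, F1_even]

lemma sF1'_nonneg (hδ₀ : 0 < δ₀) (hδ : δ₀ < Real.exp (-(3/2))) {s : ℝ} (hs : 0 < s) :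
    0 ≤ F1' δ₀ s := by
  have hBn := hB hδ₀ hδ
  rcases lt_or_ge s δ₀ with h | h
  · rw [F1'_of_lt hs h]
    have := log_sq_lt hs h hδ₀ hδ
    nlinarith
  · rw [F1'_of_ge hs h]
    nlinarith

lemma sF1'_le (hδ₀ : 0 < δ₀) (hδ : δ₀ < Real.exp (-(3/2))) (s : ℝ) :
    |s * F1' δ₀ s| ≤ 3 * F1 δ₀ s := by
  have hBn := hB hδ₀ hδ
  rcases eq_or_ne s 0 with rfl | hs0
  · simp [F1'_zero, F1_zero]
  -- reduce to positive s
  suffices H : ∀ t : ℝ, 0 < t → |t * F1' δ₀ t| ≤ 3 * F1 δ₀ t by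
    rcases lt_or_gt_of_ne hs0 with hs | hs
    · have := H (-s) (by linarith)
      rw [F1'_odd, F1_even] at this
      simpa [abs_mul] using this
    · exact H s hs
  intro t ht
  have hnn : 0 ≤ t * F1' δ₀ t := mul_nonneg ht.le (sF1'_nonneg hδ₀ hδ ht)
  rw [abs_of_nonneg hnn]
  rcases lt_or_ge t δ₀ with h | h
  · rw [F1'_of_lt ht h, F1_of_lt ht h]
    have := log_sq_lt ht h hδ₀ hδ
    nlinarith [sq_nonneg t]
  · rw [F1'_of_ge ht h, F1_of_ge ht h]
    nlinarith [sq_nonneg t, mul_pos hδ₀ (lt_of_lt_of_le hδ₀ h)]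

end BLaux

namespace BLaux

variable {δ₀ : ℝ}

lemma F1_scale_ge (hδ₀ : 0 < δ₀) (hδ : δ₀ < Real.exp (-(3/2))) {s l : ℝ}
    (hs : 0 ≤ s) (hl : 1 ≤ l) : l * F1 δ₀ s ≤ F1 δ₀ (l * s) := by
  have hBn := hB hδ₀ hδ
  rcases hs.eq_or_lt with rfl | hs
  · simp [F1_zero]
  have hl0 : 0 < l := lt_of_lt_of_le one_pos hl
  have hls : 0 < l * s := mul_pos hl0 hs
  have hsls : s ≤ l * s := le_mul_of_one_le_left hs.le hl
  rcases lt_or_ge (l * s) δ₀ with hA | hA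
  · -- both in log region
    have hsδ : s < δ₀ := lt_of_le_of_lt hsls hA
    rw [F1_of_lt hs hsδ, F1_of_lt hls hA]
    have hlog : Real.log ((l*s)^2) = 2 * Real.log l + Real.log (s^2) := by
      rw [mul_pow, Real.log_mul (by positivity) (by positivity), sq l,
        Real.log_mul hl0.ne' hl0.ne']
      ring
    rw [hlog]
    have ha0 : 0 ≤ Real.log l := Real.log_nonneg hl
    have ha1 : Real.log l ≤ l - 1 := Real.log_le_sub_one_of_pos hl0
    have hLs : Real.log (s^2) ≤ -3 - 2 * Real.log l := by
      have h1 : Real.log (l*s) < -(3/2) := by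
        have := Real.log_lt_log hls (hA.trans hδ)
        rwa [Real.log_exp] at this
      have h2 : Real.log (l*s) = Real.log l + Real.log s := Real.log_mul hl0.ne' hs.ne'
      have h3 : Real.log (s^2) = 2 * Real.log s := by
        rw [sq, Real.log_mul hs.ne' hs.ne']; ring
      linarith
    set a := Real.log l with ha
    set L := Real.log (s^2) with hL
    have hbr : 0 ≤ (l - 1) * (-L) - 2 * l * a := by nlinarith [mul_nonneg (sub_nonneg.2 hl) ha0]
    nlinarith [mul_nonneg (mul_nonneg hl0.le (sq_nonneg s)) hbr]
  · rcases lt_or_ge s δ₀ with hC | hC2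
    · -- crossing case
      rw [F1_of_lt hs hC, F1_of_ge hls hA]
      set D := Real.log (δ₀^2) with hD
      set L := Real.log (s^2) with hL
      have hP : 3 < -D := by linarith
      have hr0 : L ≤ D := Real.log_le_log (by positivity) (by nlinarith)
      have hsr : s * ((D - L)/2) ≤ δ₀ - s := by
        have h1 : Real.log (δ₀/s) ≤ δ₀/s - 1 := Real.log_le_sub_one_of_pos (by positivity)
        have h2 : Real.log (δ₀/s) = (D - L)/2 := by
          rw [Real.log_div hδ₀.ne' hs.ne', hD, hL, sq, sq, Real.log_mul hδ₀.ne' hδ₀.ne',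
            Real.log_mul hs.ne' hs.ne']
          ring
        rw [h2] at h1
        have := mul_le_mul_of_nonneg_left h1 hs.le
        rw [mul_sub, mul_div_cancel₀ _ hs.ne'] at this
        linarith
      have key : F1 δ₀ (l*s) - l * F1 δ₀ s
          = (1/2)*((-D) - 3)*l*s^2*(l-1) + l*s*((δ₀ - s) - s*((D-L)/2))
            + (1/2)*l*s*(δ₀ - s) + (1/2)*δ₀*(l*s - δ₀) := by
        rw [F1_of_lt hs hC, F1_of_ge hls hA]
        ring
      have t1 : 0 ≤ (1/2)*((-D) - 3)*l*s^2*(l-1) := by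
        apply mul_nonneg (mul_nonneg (mul_nonneg (by nlinarith) hl0.le) (sq_nonneg s))
        linarith
      have t2 : 0 ≤ l*s*((δ₀ - s) - s*((D-L)/2)) :=
        mul_nonneg hls.le (by linarith)
      have t3 : 0 ≤ (1/2)*l*s*(δ₀ - s) := by 
        apply mul_nonneg (by positivity)
        linarith
      have t4 : 0 ≤ (1/2)*δ₀*(l*s - δ₀) := by
        apply mul_nonneg (by positivity)
        linarith
      linarith [key, t1, t2, t3, t4]
    · -- both quadratic region
      rw [F1_of_ge hs hC2, F1_of_ge hls hA]
      have key : (-(1/2) * (l*s)^2 * (Real.log (δ₀^2) + 3) + 2*δ₀*(l*s) - δ₀^2/2)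
          - l * (-(1/2) * s^2 * (Real.log (δ₀^2) + 3) + 2*δ₀*s - δ₀^2/2)
          = (1/2)*(-(Real.log (δ₀^2) + 3))*s^2*(l^2-l) + (l-1)*δ₀^2/2 := by ring
      nlinarith [mul_nonneg (mul_nonneg (by linarith : (0:ℝ) ≤ -(Real.log (δ₀^2) + 3))
        (sq_nonneg s)) (by nlinarith : (0:ℝ) ≤ l^2 - l), sq_nonneg δ₀]

end BLaux

namespace BLaux

variable {δ₀ : ℝ}

lemma F1_scale_le (hδ₀ : 0 < δ₀) (hδ : δ₀ < Real.exp (-(3/2))) {s l : ℝ}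
    (hs : 0 ≤ s) (hl : 1 ≤ l) : F1 δ₀ (l * s) ≤ l^2 * F1 δ₀ s := by
  have hBn := hB hδ₀ hδ
  rcases hs.eq_or_lt with rfl | hs
  · simp [F1_zero]
  have hl0 : 0 < l := lt_of_lt_of_le one_pos hl
  have hls : 0 < l * s := mul_pos hl0 hs
  have hsls : s ≤ l * s := le_mul_of_one_le_left hs.le hl
  rcases lt_or_ge (l * s) δ₀ with hA | hA
  · have hsδ : s < δ₀ := lt_of_le_of_lt hsls hA
    rw [F1_of_lt hs hsδ, F1_of_lt hls hA]
    have hlog : Real.log ((l*s)^2) = 2 * Real.log l + Real.log (s^2) := by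
      rw [mul_pow, Real.log_mul (by positivity) (by positivity), sq l,
        Real.log_mul hl0.ne' hl0.ne']
      ring
    rw [hlog]
    have ha0 : 0 ≤ Real.log l := Real.log_nonneg hl
    nlinarith [mul_nonneg (mul_nonneg (sq_nonneg l) (sq_nonneg s)) ha0]
  · rcases lt_or_ge s δ₀ with hC | hC2
    · rw [F1_of_lt hs hC, F1_of_ge hls hA]
      set D := Real.log (δ₀^2) with hD
      set L := Real.log (s^2) with hL
      have hr0 : L ≤ D := Real.log_le_log (by positivity) (by nlinarith)
      have key : l^2 * F1 δ₀ s - F1 δ₀ (l*s)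
          = (1/2)*(l*s)^2*(D - L) + (3/2)*((l*s) - δ₀)*((l*s) - δ₀/3) := by
        rw [F1_of_lt hs hC, F1_of_ge hls hA]
        ring
      have t1 : 0 ≤ (1/2)*(l*s)^2*(D - L) := by
        apply mul_nonneg (by positivity); linarith
      have t2 : 0 ≤ (3/2)*((l*s) - δ₀)*((l*s) - δ₀/3) := by
        apply mul_nonneg (by apply mul_nonneg (by norm_num); linarith)
        linarith
      linarith [key, t1, t2]
    · rw [F1_of_ge hs hC2, F1_of_ge hls hA]
      have key : l^2 * (-(1/2) * s^2 * (Real.log (δ₀^2) + 3) + 2*δ₀*s - δ₀^2/2)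
          - (-(1/2) * (l*s)^2 * (Real.log (δ₀^2) + 3) + 2*δ₀*(l*s) - δ₀^2/2)
          = 2*δ₀*(s-δ₀)*l*(l-1) + δ₀^2*(l-1)*(3*l-1)/2 := by ring
      have t1 : 0 ≤ 2*δ₀*(s-δ₀)*l*(l-1) := by
        apply mul_nonneg (mul_nonneg (mul_nonneg (by linarith) (by linarith)) hl0.le)
        linarith
      have t2 : 0 ≤ δ₀^2*(l-1)*(3*l-1)/2 := by
        apply div_nonneg _ (by norm_num)
        apply mul_nonneg (mul_nonneg (sq_nonneg δ₀) (by linarith))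
        linarith
      linarith [key, t1, t2]

lemma F1_mono (hδ₀ : 0 < δ₀) (hδ : δ₀ < Real.exp (-(3/2))) {x y : ℝ}
    (hx : 0 ≤ x) (hxy : x ≤ y) : F1 δ₀ x ≤ F1 δ₀ y := by
  rcases hx.eq_or_lt with rfl | hx
  · rw [F1_zero]; exact F1_nonneg hδ₀ hδ y
  have hl : 1 ≤ y / x := (one_le_div hx).2 hxy
  have := F1_scale_ge hδ₀ hδ hx.le hl
  rw [div_mul_cancel₀ _ hx.ne'] at this
  nlinarith [F1_nonneg hδ₀ hδ x]

lemma F1_quad (hδ₀ : 0 < δ₀) (hδ : δ₀ < Real.exp (-(3/2))) {l : ℝ} (hl : 1 ≤ l) (s : ℝ) :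
    F1 δ₀ (l * s) ≤ l^2 * F1 δ₀ s := by
  rw [F1_abs (l*s), F1_abs s, abs_mul, abs_of_nonneg (by linarith : (0:ℝ) ≤ l)]
  exact F1_scale_le hδ₀ hδ (abs_nonneg s) hl

lemma F1_slope_mul (hδ₀ : 0 < δ₀) (hδ : δ₀ < Real.exp (-(3/2))) {t m : ℝ}
    (ht : 0 < t) (htm : t ≤ m) : m * F1 δ₀ t ≤ t * F1 δ₀ m := by
  have hl : 1 ≤ m / t := (one_le_div ht).2 htm
  have h := F1_scale_ge hδ₀ hδ ht.le hl
  rw [div_mul_cancel₀ _ ht.ne'] at h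
  have := mul_le_mul_of_nonneg_left h ht.le
  calc m * F1 δ₀ t = t * (m / t * F1 δ₀ t) := by field_simp
    _ ≤ t * F1 δ₀ m := this

end BLaux

namespace BLaux

variable {δ₀ : ℝ}

/-- derivative of the inner piece -/
lemma hasDerivAt_p1 {s : ℝ} (hs : s ≠ 0) :
    HasDerivAt (fun t : ℝ => -(1/2) * t^2 * Real.log (t^2))
      (-(Real.log (s^2) + 1) * s) s := by
  have h1 : HasDerivAt (fun t : ℝ => t^2) (2 * s) s := by
    simpa using hasDerivAt_pow 2 s
  have h2 : HasDerivAt (fun t : ℝ => Real.log (t^2)) (2 * s / s^2) s :=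
    h1.log (pow_ne_zero 2 hs)
  have h3 := (h1.mul h2).const_mul (-(1/2) : ℝ)
  refine (h3.congr_deriv ?_).congr_of_eventuallyEq (Filter.Eventually.of_forall fun t => ?_)
  · field_simp
  · simp only [Pi.mul_apply]; ring

/-- derivative of the outer piece (positive side) -/
lemma hasDerivAt_p2 (c : ℝ) (s : ℝ) :
    HasDerivAt (fun t : ℝ => -(1/2) * t^2 * (Real.log (c^2) + 3) + 2*c*t - c^2/2)
      (-(Real.log (c^2) + 3) * s + 2*c) s := by
  have h1 : HasDerivAt (fun t : ℝ => t^2) (2 * s) s := by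
    simpa using hasDerivAt_pow 2 s
  have h2 := ((h1.const_mul (-(1/2) : ℝ)).mul_const (Real.log (c^2) + 3)).add
    ((hasDerivAt_id s).const_mul (2*c))
  have h3 := h2.sub_const (c^2/2)
  refine (h3.congr_deriv ?_).congr_of_eventuallyEq (Filter.Eventually.of_forall fun t => ?_)
  · ring
  · simp

lemma F1_match (c : ℝ) :
    -(1/2) * c^2 * (Real.log (c^2) + 3) + 2*c*c - c^2/2
      = -(1/2) * c^2 * Real.log (c^2) := by ring

lemma hasDerivAt_F1_pos (hδ₀ : 0 < δ₀) {s : ℝ} (hs : 0 < s) :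
    HasDerivAt (F1 δ₀) (F1' δ₀ s) s := by
  rcases lt_trichotomy s δ₀ with h | h | h
  · -- inner region
    rw [F1'_of_lt hs h]
    apply (hasDerivAt_p1 hs.ne').congr_of_eventuallyEq
    filter_upwards [Ioo_mem_nhds hs h] with t ht
    exact F1_of_lt ht.1 ht.2
  · -- junction
    subst h
    have hL : HasDerivWithinAt (F1 s) (F1' s s) (Set.Iic s) s := by
      have hd : HasDerivAt (fun t : ℝ => -(1/2) * t^2 * Real.log (t^2))
          (F1' s s) s := by
        have := hasDerivAt_p1 hs.ne'
        convert this using 1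
        rw [F1'_of_ge hs le_rfl]
        ring
      apply hd.hasDerivWithinAt.congr_of_eventuallyEq
      · have hmem : Set.Ioc (s/2) s ∈ nhdsWithin s (Set.Iic s) := by
          apply mem_nhdsWithin.2
          exact ⟨Set.Ioi (s/2), isOpen_Ioi, by simp; linarith, fun t ht => ⟨ht.1, ht.2⟩⟩
        filter_upwards [hmem] with t ht
        rcases lt_or_eq_of_le ht.2 with h' | h'
        · exact F1_of_lt (by linarith [ht.1]) h'
        · subst h'
          rw [F1_of_ge hs le_rfl, F1_match]
      · rw [F1_of_ge hs le_rfl, F1_match]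
    have hR : HasDerivWithinAt (F1 s) (F1' s s) (Set.Ici s) s := by
      have hd := hasDerivAt_p2 s s
      rw [F1'_of_ge hs le_rfl]
      apply hd.hasDerivWithinAt.congr_of_eventuallyEq
      · filter_upwards [self_mem_nhdsWithin] with t ht
        exact F1_of_ge (lt_of_lt_of_le hs ht) ht
      · exact F1_of_ge hs le_rfl
    have h2 := hL.union hR
    rw [Set.Iic_union_Ici] at h2
    exact hasDerivWithinAt_univ.mp h2
  · -- outer region
    rw [F1'_of_ge hs h.le]
    have hd := hasDerivAt_p2 δ₀ s
    apply hd.congr_of_eventuallyEq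
    filter_upwards [Ioi_mem_nhds h] with t ht
    exact F1_of_ge (hδ₀.trans ht) (le_of_lt ht)

end BLaux

namespace BLaux

variable {δ₀ : ℝ}

lemma hasDerivAt_F1_zero (hδ₀ : 0 < δ₀) : HasDerivAt (F1 δ₀) (F1' δ₀ 0) 0 := by
  rw [F1'_zero, hasDerivAt_iff_tendsto_slope]
  have habs : Filter.Tendsto (fun t : ℝ => |t|) (nhdsWithin 0 {(0:ℝ)}ᶜ) (nhdsWithin 0 (Set.Ioi 0)) := by
    apply tendsto_abs_nhdsNE_zero
  have hg : Filter.Tendsto (fun t : ℝ => Real.log |t| * |t|)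
      (nhdsWithin 0 {(0:ℝ)}ᶜ) (nhds 0) := by
    have h1 := tendsto_log_mul_rpow_nhdsGT_zero (one_pos)
    have h1' : Filter.Tendsto (fun x : ℝ => Real.log x * x) (nhdsWithin 0 (Set.Ioi 0)) (nhds 0) := by
      simpa using h1
    exact h1'.comp habs
  apply squeeze_zero_norm' (a := fun t => abs (Real.log (abs t) * abs t))
  · filter_upwards [self_mem_nhdsWithin,
      eventually_nhdsWithin_of_eventually_nhds
        (eventually_abs_sub_lt 0 (by linarith : (0:ℝ) < δ₀))] with t ht ht2
    have ht0 : t ≠ 0 := ht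
    have htδ : |t| < δ₀ := by simpa using ht2
    have hslope : slope (F1 δ₀) 0 t = -(1/2) * t * Real.log (t^2) := by
      rw [slope_def_field, F1_zero]
      have : F1 δ₀ t = -(1/2) * t^2 * Real.log (t^2) := by
        rw [F1_abs]
        rw [F1_of_lt (abs_pos.2 ht0) htδ]
        rw [sq_abs]
      rw [this]
      field_simp
      ring
    rw [hslope]
    have hlog : Real.log (t^2) = 2 * Real.log |t| := by
      rw [← sq_abs, sq, Real.log_mul (abs_ne_zero.2 ht0) (abs_ne_zero.2 ht0)]; ring
    rw [hlog]
    rw [Real.norm_eq_abs]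
    have : -(1/2) * t * (2 * Real.log |t|) = -(t * Real.log |t|) := by ring
    rw [this, abs_neg, abs_mul, abs_mul, abs_abs]
    rw [mul_comm]
  · simpa using hg.abs

lemma hasDerivAt_F1 (hδ₀ : 0 < δ₀) (s : ℝ) : HasDerivAt (F1 δ₀) (F1' δ₀ s) s := by
  rcases lt_trichotomy s 0 with h | h | h
  · have H := (hasDerivAt_F1_pos hδ₀ (by linarith : 0 < -s)).comp s (hasDerivAt_neg s)
    have he : (fun t : ℝ => F1 δ₀ (-t)) = F1 δ₀ := funext fun t => F1_even t
    have : (F1 δ₀ ∘ fun t : ℝ => -t) = F1 δ₀ := he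
    rw [this] at H
    have hval : F1' δ₀ (-s) * (-1) = F1' δ₀ s := by rw [F1'_odd]; ring
    rwa [hval] at H
  · subst h; exact hasDerivAt_F1_zero hδ₀
  · exact hasDerivAt_F1_pos hδ₀ h

lemma continuous_F1 (hδ₀ : 0 < δ₀) : Continuous (F1 δ₀) :=
  continuous_iff_continuousAt.2 fun s => (hasDerivAt_F1 hδ₀ s).continuousAt

end BLaux

namespace BLaux

variable {δ₀ : ℝ}

lemma F1_diff_bound_aux (hδ₀ : 0 < δ₀) (hδ : δ₀ < Real.exp (-(3/2))) {x y : ℝ}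
    (hyx : y < x) :
    (max |x| |y|) * |F1 δ₀ x - F1 δ₀ y| ≤ 3 * |x - y| * F1 δ₀ (max |x| |y|) := by
  set m := max |x| |y| with hm
  have hm0 : 0 ≤ m := le_trans (abs_nonneg x) (le_max_left _ _)
  obtain ⟨ξ, hξ, hslope⟩ := exists_hasDerivAt_eq_slope (F1 δ₀) (F1' δ₀) hyx
    ((continuous_F1 hδ₀).continuousOn) (fun t _ => hasDerivAt_F1 hδ₀ t)
  have hxy0 : 0 < x - y := sub_pos.2 hyx
  have hmul : F1 δ₀ x - F1 δ₀ y = F1' δ₀ ξ * (x - y) := by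
    rw [hslope]; field_simp
  have hξm : |ξ| ≤ m := by
    rw [abs_le]
    constructor
    · have : -ξ ≤ -y := by linarith [hξ.1]
      calc -m ≤ -|y| := by simp [hm]
        _ ≤ y := neg_abs_le y
        _ ≤ ξ := hξ.1.le
    · calc ξ ≤ x := hξ.2.le
        _ ≤ |x| := le_abs_self x
        _ ≤ m := le_max_left _ _
  have hFm : 0 ≤ F1 δ₀ m := F1_nonneg hδ₀ hδ m
  rcases eq_or_ne ξ 0 with rfl | hξ0
  · rw [hmul, F1'_zero, zero_mul, abs_zero, mul_zero]
    positivity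
  · have hξp : 0 < |ξ| := abs_pos.2 hξ0
    have h1 : |ξ| * |F1' δ₀ ξ| ≤ 3 * F1 δ₀ |ξ| := by
      have h := sF1'_le hδ₀ hδ ξ
      rw [← F1_abs]
      rwa [abs_mul] at h
    have h2 : m * F1 δ₀ |ξ| ≤ |ξ| * F1 δ₀ m := F1_slope_mul hδ₀ hδ hξp (hξm)
    have habs1 : |F1 δ₀ x - F1 δ₀ y| = |F1' δ₀ ξ| * (x - y) := by
      rw [hmul, abs_mul, abs_of_pos hxy0]
    have habs2 : |x - y| = x - y := abs_of_pos hxy0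
    rw [habs1, habs2]
    have key : m * (|F1' δ₀ ξ| * (x - y)) * |ξ| ≤ 3 * (x - y) * F1 δ₀ m * |ξ| := by
      calc m * (|F1' δ₀ ξ| * (x - y)) * |ξ|
          = (m * (x-y)) * (|ξ| * |F1' δ₀ ξ|) := by ring
        _ ≤ (m * (x-y)) * (3 * F1 δ₀ |ξ|) := by
            apply mul_le_mul_of_nonneg_left h1 (by positivity)
        _ = (3 * (x-y)) * (m * F1 δ₀ |ξ|) := by ring
        _ ≤ (3 * (x-y)) * (|ξ| * F1 δ₀ m) := by
            apply mul_le_mul_of_nonneg_left h2 (by positivity)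
        _ = 3 * (x - y) * F1 δ₀ m * |ξ| := by ring
    exact le_of_mul_le_mul_right key hξp

lemma F1_diff_bound (hδ₀ : 0 < δ₀) (hδ : δ₀ < Real.exp (-(3/2))) (x y : ℝ) :
    (max |x| |y|) * |F1 δ₀ x - F1 δ₀ y| ≤ 3 * |x - y| * F1 δ₀ (max |x| |y|) := by
  rcases lt_trichotomy y x with h | h | h
  · exact F1_diff_bound_aux hδ₀ hδ h
  · subst h
    simp only [sub_self, abs_zero, mul_zero, zero_mul]
    positivity
  · have := F1_diff_bound_aux hδ₀ hδ h
    rw [max_comm, abs_sub_comm (F1 δ₀ y), abs_sub_comm y x] at this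
    exact this

lemma F1_key (hδ₀ : 0 < δ₀) (hδ : δ₀ < Real.exp (-(3/2))) {ε : ℝ}
    (hε : 0 < ε) (hε1 : ε ≤ 1) (a b : ℝ) :
    |F1 δ₀ (a + b) - F1 δ₀ a| ≤ ε * F1 δ₀ a + (ε + 864/ε^2) * F1 δ₀ b := by
  have hFa := F1_nonneg hδ₀ hδ a
  have hFb := F1_nonneg hδ₀ hδ b
  set m := max |a + b| |a| with hm
  have hm0 : 0 ≤ m := le_trans (abs_nonneg _) (le_max_left _ _)
  have hdb : m * |F1 δ₀ (a+b) - F1 δ₀ a| ≤ 3 * |b| * F1 δ₀ m := by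
    have := F1_diff_bound hδ₀ hδ (a+b) a
    simpa using this
  have hFm0 : 0 ≤ F1 δ₀ m := F1_nonneg hδ₀ hδ m
  have hbm : |b| ≤ 2 * m := by
    have h1 : |b| ≤ |a + b| + |a| := by
      calc |b| = |(a+b) - a| := by ring_nf
        _ ≤ |a+b| + |a| := abs_sub _ _
    have h2 : |a+b| ≤ m := le_max_left _ _
    have h3 : |a| ≤ m := le_max_right _ _
    linarith
  have hFm : F1 δ₀ m ≤ 4 * (F1 δ₀ a + F1 δ₀ b) := by
    have h1 : m ≤ 2 * max |a| |b| := by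
      have : |a + b| ≤ |a| + |b| := abs_add_le a b
      have h2 : |a| ≤ max |a| |b| := le_max_left _ _
      have h3 : |b| ≤ max |a| |b| := le_max_right _ _
      have h0a := abs_nonneg a
      have h0b := abs_nonneg b
      apply max_le <;> linarith
    have h2 : F1 δ₀ m ≤ F1 δ₀ (2 * max |a| |b|) := F1_mono hδ₀ hδ hm0 h1
    have h3 : F1 δ₀ (2 * max |a| |b|) ≤ 2^2 * F1 δ₀ (max |a| |b|) :=
      F1_scale_le hδ₀ hδ (le_trans (abs_nonneg a) (le_max_left _ _)) one_le_two
    have h4 : F1 δ₀ (max |a| |b|) ≤ F1 δ₀ a + F1 δ₀ b := by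
      rcases max_cases |a| |b| with ⟨h5, _⟩ | ⟨h5, _⟩ <;> rw [h5]
      · rw [← F1_abs]; linarith
      · rw [← F1_abs]; linarith
    nlinarith
  rcases hm0.eq_or_lt with hm0' | hm0'
  · -- m = 0 : a = 0 and a + b = 0
    have h1 : a + b = 0 := by
      have h : |a+b| ≤ m := le_max_left _ _
      rw [← hm0'] at h
      exact abs_eq_zero.1 (le_antisymm h (abs_nonneg _))
    have h2 : a = 0 := by
      have h : |a| ≤ m := le_max_right _ _
      rw [← hm0'] at h
      exact abs_eq_zero.1 (le_antisymm h (abs_nonneg _))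
    rw [h1, h2, F1_zero, sub_zero, abs_zero]
    positivity
  by_cases hb : |b| ≤ (ε / 12) * m
  · have step1 : m * |F1 δ₀ (a+b) - F1 δ₀ a| ≤ m * ((ε/4) * F1 δ₀ m) := by
        calc m * |F1 δ₀ (a+b) - F1 δ₀ a| ≤ 3 * |b| * F1 δ₀ m := hdb
          _ ≤ 3 * ((ε/12) * m) * F1 δ₀ m := by
              apply mul_le_mul_of_nonneg_right _ hFm0
              linarith
          _ = m * ((ε/4) * F1 δ₀ m) := by ring
    have step2 : |F1 δ₀ (a+b) - F1 δ₀ a| ≤ (ε/4) * F1 δ₀ m :=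
      le_of_mul_le_mul_left step1 hm0'
    have : (ε/4) * F1 δ₀ m ≤ ε * (F1 δ₀ a + F1 δ₀ b) := by nlinarith
    have hrest : 0 ≤ 864/ε^2 * F1 δ₀ b := by positivity
    nlinarith
  · push_neg at hb
    have hmb : m < (12/ε) * |b| := by
      rw [div_mul_eq_mul_div, lt_div_iff₀ hε]
      linarith
    have h12 : (1:ℝ) ≤ 12/ε := by
      rw [le_div_iff₀ hε]; linarith
    have hFmb : F1 δ₀ m ≤ (144/ε^2) * F1 δ₀ b := by
      have h1 : F1 δ₀ m ≤ F1 δ₀ ((12/ε) * |b|) := F1_mono hδ₀ hδ hm0 hmb.le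
      have h2 : F1 δ₀ ((12/ε) * |b|) ≤ (12/ε)^2 * F1 δ₀ |b| :=
        F1_scale_le hδ₀ hδ (abs_nonneg b) h12
      rw [← F1_abs] at h2
      have h3 : (12/ε)^2 = 144/ε^2 := by field_simp; ring
      rw [h3] at h2
      linarith
    have step1 : m * |F1 δ₀ (a+b) - F1 δ₀ a| ≤ m * (6 * F1 δ₀ m) := by
        calc m * |F1 δ₀ (a+b) - F1 δ₀ a| ≤ 3 * |b| * F1 δ₀ m := hdb
          _ ≤ 3 * (2*m) * F1 δ₀ m := by
              apply mul_le_mul_of_nonneg_right _ hFm0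
              linarith
          _ = m * (6 * F1 δ₀ m) := by ring
    have step2 : |F1 δ₀ (a+b) - F1 δ₀ a| ≤ 6 * F1 δ₀ m :=
      le_of_mul_le_mul_left step1 hm0'
    have : 6 * F1 δ₀ m ≤ (864/ε^2) * F1 δ₀ b := by
      have he : (864:ℝ)/ε^2 * F1 δ₀ b = 6*(144/ε^2 * F1 δ₀ b) := by ring
      rw [he]
      linarith
    nlinarith [mul_nonneg hε.le hFa, mul_nonneg hε.le hFb]

end BLaux


theorem stmt_19 (δ₀ : ℝ) (hδ₀ : 0 < δ₀) (hδ₀' : δ₀ < Real.exp (-(3/2)))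
    (u : ℕ → EuclideanSpace ℝ (Fin 3) → ℝ) (v : EuclideanSpace ℝ (Fin 3) → ℝ)
    (hu : ∀ n, Measurable (u n)) (hv : Measurable v)
    (hae : ∀ᵐ x : EuclideanSpace ℝ (Fin 3) ∂volume,
      Tendsto (fun n => u n x) atTop (nhds (v x)))
    (hint : ∀ n, Integrable (fun x => F1 δ₀ (u n x)) volume)
    (hbdd : ∃ C : ℝ, ∀ n, ∫ x, F1 δ₀ (u n x) ∂volume ≤ C) :
    Integrable (fun x => F1 δ₀ (v x)) volume ∧
      Tendsto
        (fun n => (∫ x, F1 δ₀ (u n x) ∂volume) - ∫ x, F1 δ₀ (u n x - v x) ∂volume)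
        atTop (nhds (∫ x, F1 δ₀ (v x) ∂volume)) := by
  obtain ⟨C₀, hC₀⟩ := hbdd
  have hFc : Continuous (F1 δ₀) := BLaux.continuous_F1 hδ₀
  have hFnn : ∀ s, 0 ≤ F1 δ₀ s := BLaux.F1_nonneg hδ₀ hδ₀'
  have hmeas_f : ∀ n, AEStronglyMeasurable (fun x => F1 δ₀ (u n x)) volume :=
    fun n => (hFc.measurable.comp (hu n)).aestronglyMeasurable
  have hmeas_g : ∀ n, AEStronglyMeasurable (fun x => F1 δ₀ (u n x - v x)) volume :=
    fun n => (hFc.measurable.comp ((hu n).sub hv)).aestronglyMeasurable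
  have hmeas_v : AEStronglyMeasurable (fun x => F1 δ₀ (v x)) volume :=
    (hFc.measurable.comp hv).aestronglyMeasurable
  have haeF : ∀ᵐ x ∂(volume : Measure (EuclideanSpace ℝ (Fin 3))),
      Tendsto (fun n => F1 δ₀ (u n x)) atTop (nhds (F1 δ₀ (v x))) :=
    hae.mono fun x hx => (hFc.tendsto (v x)).comp hx
  have haeG : ∀ᵐ x ∂(volume : Measure (EuclideanSpace ℝ (Fin 3))),
      Tendsto (fun n => F1 δ₀ (u n x - v x)) atTop (nhds 0) := by
    filter_upwards [hae] with x hx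
    have h1 : Tendsto (fun n => u n x - v x) atTop (nhds (v x - v x)) :=
      hx.sub tendsto_const_nhds
    rw [sub_self] at h1
    have h2 := (hFc.tendsto 0).comp h1
    rwa [BLaux.F1_zero] at h2
  -- Step 1: integrability of F1 ∘ v via Fatou
  have hFv_int : Integrable (fun x => F1 δ₀ (v x)) volume := by
    have key : ∫⁻ x, ENNReal.ofReal (F1 δ₀ (v x)) ∂volume ≤ ENNReal.ofReal C₀ := by
      have h1 : ∀ n, ∫⁻ x, ENNReal.ofReal (F1 δ₀ (u n x)) ∂volume
          = ENNReal.ofReal (∫ x, F1 δ₀ (u n x) ∂volume) :=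
        fun n => (ofReal_integral_eq_lintegral_ofReal (hint n)
          (Filter.Eventually.of_forall fun x => hFnn _)).symm
      have h2 : ∀ᵐ x ∂(volume : Measure (EuclideanSpace ℝ (Fin 3))),
          ENNReal.ofReal (F1 δ₀ (v x))
            = liminf (fun n => ENNReal.ofReal (F1 δ₀ (u n x))) atTop := by
        filter_upwards [haeF] with x hx
        exact ((ENNReal.continuous_ofReal.tendsto _).comp hx).liminf_eq.symm
      calc ∫⁻ x, ENNReal.ofReal (F1 δ₀ (v x)) ∂volume
          = ∫⁻ x, liminf (fun n => ENNReal.ofReal (F1 δ₀ (u n x))) atTop ∂volume :=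
            lintegral_congr_ae h2
        _ ≤ liminf (fun n => ∫⁻ x, ENNReal.ofReal (F1 δ₀ (u n x)) ∂volume) atTop :=
            lintegral_liminf_le fun n =>
              ENNReal.measurable_ofReal.comp (hFc.measurable.comp (hu n))
        _ ≤ liminf (fun _ : ℕ => ENNReal.ofReal C₀) atTop :=
            Filter.liminf_le_liminf (Filter.Eventually.of_forall fun n => by
              rw [h1 n]; exact ENNReal.ofReal_le_ofReal (hC₀ n))
        _ = ENNReal.ofReal C₀ := Filter.liminf_const _
    refine ⟨hmeas_v, ?_⟩
    rw [hasFiniteIntegral_iff_norm]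
    have heq : ∀ x : EuclideanSpace ℝ (Fin 3),
        ENNReal.ofReal ‖F1 δ₀ (v x)‖ = ENNReal.ofReal (F1 δ₀ (v x)) := fun x => by
      rw [Real.norm_eq_abs, abs_of_nonneg (hFnn _)]
    rw [lintegral_congr heq]
    exact lt_of_le_of_lt key ENNReal.ofReal_lt_top
  -- Step 2: integrability of F1 ∘ (u n - v)
  set C' : ℝ := 1/2 + 864/(1/2:ℝ)^2 with hC'
  have hpt2 : ∀ n x, F1 δ₀ (u n x - v x) ≤ 2 * F1 δ₀ (u n x) + 2*C' * F1 δ₀ (v x) := by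
    intro n x
    have h := BLaux.F1_key hδ₀ hδ₀' (by norm_num : (0:ℝ) < 1/2) (by norm_num)
      (u n x - v x) (v x)
    rw [sub_add_cancel] at h
    have h2 := neg_abs_le (F1 δ₀ (u n x) - F1 δ₀ (u n x - v x))
    rw [hC']
    linarith [h, h2]
  have hdom_int : ∀ n, Integrable
      (fun x => 2 * F1 δ₀ (u n x) + 2*C' * F1 δ₀ (v x)) volume :=
    fun n => ((hint n).const_mul 2).add (hFv_int.const_mul (2*C'))
  have hg_int : ∀ n, Integrable (fun x => F1 δ₀ (u n x - v x)) volume := by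
    intro n
    apply Integrable.mono' (hdom_int n) (hmeas_g n)
    apply Filter.Eventually.of_forall
    intro x
    rw [Real.norm_eq_abs, abs_of_nonneg (hFnn _)]
    exact hpt2 n x
  have hf_nonneg : 0 ≤ ∫ x, F1 δ₀ (v x) ∂volume :=
    integral_nonneg fun x => hFnn _
  set M : ℝ := 2*C₀ + 2*C' * ∫ x, F1 δ₀ (v x) ∂volume with hM
  have hg_bdd : ∀ n, ∫ x, F1 δ₀ (u n x - v x) ∂volume ≤ M := by
    intro n
    calc ∫ x, F1 δ₀ (u n x - v x) ∂volume
        ≤ ∫ x, (2 * F1 δ₀ (u n x) + 2*C' * F1 δ₀ (v x)) ∂volume :=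
          integral_mono (hg_int n) (hdom_int n) (hpt2 n)
      _ = 2 * (∫ x, F1 δ₀ (u n x) ∂volume) + 2*C' * ∫ x, F1 δ₀ (v x) ∂volume := by
          rw [integral_add ((hint n).const_mul 2) (hFv_int.const_mul (2*C')),
            integral_const_mul, integral_const_mul]
      _ ≤ M := by
          rw [hM]
          linarith [hC₀ n]
  have hM0 : 0 ≤ M :=
    le_trans (integral_nonneg fun x => hFnn _) (hg_bdd 0)
  -- step 3: main convergence of ∫ |f n - g n - f|
  have main : Tendsto
      (fun n => ∫ x, |F1 δ₀ (u n x) - F1 δ₀ (u n x - v x) - F1 δ₀ (v x)| ∂volume)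
      atTop (nhds 0) := by
    have habs_int : ∀ n, Integrable
        (fun x => |F1 δ₀ (u n x) - F1 δ₀ (u n x - v x) - F1 δ₀ (v x)|) volume :=
      fun n => (((hint n).sub (hg_int n)).sub hFv_int).abs
    rw [Metric.tendsto_atTop]
    intro ε hε
    set ε' : ℝ := min (ε / (4*(M+1))) (1/2) with hε'
    have hε'pos : 0 < ε' := lt_min (by positivity) one_half_pos
    have hε'le : ε' ≤ 1 := le_trans (min_le_right _ _) (by norm_num)
    set Cε : ℝ := ε' + 864/ε'^2 with hCε
    have hCε0 : 0 ≤ Cε := by rw [hCε]; positivity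
    have hpt : ∀ n x, |F1 δ₀ (u n x) - F1 δ₀ (u n x - v x)|
        ≤ ε' * F1 δ₀ (u n x - v x) + Cε * F1 δ₀ (v x) := by
      intro n x
      have h := BLaux.F1_key hδ₀ hδ₀' hε'pos hε'le (u n x - v x) (v x)
      rwa [sub_add_cancel] at h
    set W : ℕ → EuclideanSpace ℝ (Fin 3) → ℝ := fun n x =>
      max (|F1 δ₀ (u n x) - F1 δ₀ (u n x - v x) - F1 δ₀ (v x)|
        - ε' * F1 δ₀ (u n x - v x)) 0 with hW
    have hW_nonneg : ∀ n x, 0 ≤ W n x := fun n x => le_max_right _ _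
    have hW_le : ∀ n x, W n x ≤ (Cε + 1) * F1 δ₀ (v x) := by
      intro n x
      apply max_le _ (mul_nonneg (by linarith) (hFnn _))
      have h1 : |F1 δ₀ (u n x) - F1 δ₀ (u n x - v x) - F1 δ₀ (v x)|
          ≤ |F1 δ₀ (u n x) - F1 δ₀ (u n x - v x)| + |F1 δ₀ (v x)| := by
        have := abs_sub (F1 δ₀ (u n x) - F1 δ₀ (u n x - v x)) (F1 δ₀ (v x))
        linarith [this]
      have h2 := hpt n x
      rw [abs_of_nonneg (hFnn (v x))] at h1
      linarith
    have hW_int : ∀ n, Integrable (W n) volume := by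
      intro n
      have : Integrable (fun x =>
          |F1 δ₀ (u n x) - F1 δ₀ (u n x - v x) - F1 δ₀ (v x)|
            - ε' * F1 δ₀ (u n x - v x)) volume :=
        (habs_int n).sub ((hg_int n).const_mul ε')
      exact this.pos_part
    have hW_tendsto : ∀ᵐ x ∂(volume : Measure (EuclideanSpace ℝ (Fin 3))),
        Tendsto (fun n => W n x) atTop (nhds 0) := by
      filter_upwards [haeF, haeG] with x hx hgx
      have h1 : Tendsto (fun n => F1 δ₀ (u n x) - F1 δ₀ (u n x - v x) - F1 δ₀ (v x))
          atTop (nhds (F1 δ₀ (v x) - 0 - F1 δ₀ (v x))) := (hx.sub hgx).sub tendsto_const_nhds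
      rw [show F1 δ₀ (v x) - 0 - F1 δ₀ (v x) = 0 by ring] at h1
      have h2 : Tendsto (fun n => |F1 δ₀ (u n x) - F1 δ₀ (u n x - v x) - F1 δ₀ (v x)|
          - ε' * F1 δ₀ (u n x - v x)) atTop (nhds ((|(0:ℝ)|) - ε' * 0)) :=
        h1.abs.sub (hgx.const_mul ε')
      rw [show |(0:ℝ)| - ε' * 0 = 0 by simp] at h2
      have h3 : Tendsto (fun n => max (|F1 δ₀ (u n x) - F1 δ₀ (u n x - v x) - F1 δ₀ (v x)|
          - ε' * F1 δ₀ (u n x - v x)) 0) atTop (nhds (max 0 0)) :=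
        h2.max tendsto_const_nhds
      rwa [max_self] at h3
    have hDCT : Tendsto (fun n => ∫ x, W n x ∂volume) atTop (nhds 0) := by
      have h := tendsto_integral_of_dominated_convergence
        (fun x => (Cε + 1) * F1 δ₀ (v x))
        (fun n => (hW_int n).aestronglyMeasurable)
        (hFv_int.const_mul (Cε + 1))
        (fun n => Filter.Eventually.of_forall fun x => by
          rw [Real.norm_eq_abs, abs_of_nonneg (hW_nonneg n x)]
          exact hW_le n x)
        hW_tendsto
      simpa using h
    rw [Metric.tendsto_atTop] at hDCT
    obtain ⟨N, hN⟩ := hDCT (ε/2) (by positivity)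
    refine ⟨N, fun n hn => ?_⟩
    have hWn := hN n hn
    rw [Real.dist_eq, sub_zero] at hWn ⊢
    have hWn' : ∫ x, W n x ∂volume < ε/2 := by
      have := le_abs_self (∫ x, W n x ∂volume)
      linarith
    have hint_le : ∫ x, |F1 δ₀ (u n x) - F1 δ₀ (u n x - v x) - F1 δ₀ (v x)| ∂volume
        ≤ (∫ x, W n x ∂volume) + ε' * ∫ x, F1 δ₀ (u n x - v x) ∂volume := by
      have hptW : ∀ x, |F1 δ₀ (u n x) - F1 δ₀ (u n x - v x) - F1 δ₀ (v x)|
          ≤ W n x + ε' * F1 δ₀ (u n x - v x) := by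
        intro x
        have h : |F1 δ₀ (u n x) - F1 δ₀ (u n x - v x) - F1 δ₀ (v x)|
            - ε' * F1 δ₀ (u n x - v x) ≤ W n x := le_max_left _ _
        linarith
      calc ∫ x, |F1 δ₀ (u n x) - F1 δ₀ (u n x - v x) - F1 δ₀ (v x)| ∂volume
          ≤ ∫ x, (W n x + ε' * F1 δ₀ (u n x - v x)) ∂volume :=
            integral_mono (habs_int n)
              ((hW_int n).add ((hg_int n).const_mul ε')) hptW
        _ = (∫ x, W n x ∂volume) + ε' * ∫ x, F1 δ₀ (u n x - v x) ∂volume := by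
            rw [integral_add (hW_int n) ((hg_int n).const_mul ε'), integral_const_mul]
    have hg_nonneg : 0 ≤ ∫ x, F1 δ₀ (u n x - v x) ∂volume :=
      integral_nonneg fun x => hFnn _
    have hε'M : ε' * ∫ x, F1 δ₀ (u n x - v x) ∂volume ≤ ε/4 := by
      have h1 : ε' ≤ ε / (4*(M+1)) := min_le_left _ _
      have h2 : ε' * ∫ x, F1 δ₀ (u n x - v x) ∂volume ≤ ε' * M :=
        mul_le_mul_of_nonneg_left (hg_bdd n) hε'pos.le
      have h3 : ε' * M ≤ (ε / (4*(M+1))) * M :=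
        mul_le_mul_of_nonneg_right h1 hM0
      have h4 : (ε / (4*(M+1))) * M ≤ ε/4 := by
        rw [div_mul_eq_mul_div, div_le_div_iff₀ (by positivity) (by norm_num)]
        nlinarith
      exact le_trans h2 (le_trans h3 h4)
    have habs_nonneg : 0 ≤ ∫ x, |F1 δ₀ (u n x) - F1 δ₀ (u n x - v x) - F1 δ₀ (v x)| ∂volume :=
      integral_nonneg fun x => abs_nonneg _
    rw [abs_of_nonneg habs_nonneg]
    linarith
  -- final assembly
  refine ⟨hFv_int, ?_⟩
  rw [← tendsto_sub_nhds_zero_iff]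
  apply squeeze_zero_norm _ main
  intro n
  rw [Real.norm_eq_abs]
  have heq : (∫ x, F1 δ₀ (u n x) ∂volume) - (∫ x, F1 δ₀ (u n x - v x) ∂volume)
      - (∫ x, F1 δ₀ (v x) ∂volume)
      = ∫ x, (F1 δ₀ (u n x) - F1 δ₀ (u n x - v x) - F1 δ₀ (v x)) ∂volume := by
    have A : ∫ x, (F1 δ₀ (u n x) - F1 δ₀ (u n x - v x) - F1 δ₀ (v x)) ∂volume
        = (∫ x, (F1 δ₀ (u n x) - F1 δ₀ (u n x - v x)) ∂volume)
          - ∫ x, F1 δ₀ (v x) ∂volume :=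
      integral_sub ((hint n).sub (hg_int n)) hFv_int
    have B : ∫ x, (F1 δ₀ (u n x) - F1 δ₀ (u n x - v x)) ∂volume
        = (∫ x, F1 δ₀ (u n x) ∂volume) - ∫ x, F1 δ₀ (u n x - v x) ∂volume :=
      integral_sub (hint n) (hg_int n)
    rw [A, B]
  rw [heq]
  have h := norm_integral_le_integral_norm
    (fun x => F1 δ₀ (u n x) - F1 δ₀ (u n x - v x) - F1 δ₀ (v x)) (μ := volume)
  simpa [Real.norm_eq_abs] using h
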